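/- arXiv:0812.1300 — 2 statements merged into one kernel-verified Lean document; each statement's English description precedes it below -/
import Mathlib

section
/- Let n > 1, N = dn, and let A₁, …, A_{d-1} be real d×d matrices such that each Aᵢ is skew-symmetric, AᵢᵀAᵢ = I_d, and AᵢᵀAⱼ + AⱼᵀAᵢ = 0 for i ≠ j; set A₀ = I_d. For λ ∈ ℝ^d with Σλᵢ² = 1 let 𝒢_λ be the N×N block-diagonal matrix with n equal diagonal blocks Σ_{i=0}^{d-1} λᵢAᵢ, and let 𝒜ᵢ be the N×N block-diagonal matrix with n equal diagonal blocks Aᵢ. If f : S^{N-1} → ℝ satisfies f(𝒢_λ θ) = f(θ) for every such λ and every θ ∈ S^{N-1}, then for every θ ∈ S^{N-1}, f is constant on S^{N-1} ∩ span{θ, 𝒜₁θ, …, 𝒜_{d-1}θ}; that is, f(η) = f(θ) for every unit vector η in that span. -/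
open Matrix

private lemma dp_sum_right {m ι : Type*} [Fintype m] (s : Finset ι)
    (w : m → ℝ) (v : ι → m → ℝ) :
    w ⬝ᵥ (∑ i ∈ s, v i) = ∑ i ∈ s, w ⬝ᵥ v i := by
  simp [dotProduct, Finset.mul_sum, Finset.sum_apply]
  exact Finset.sum_comm

private lemma dp_sum_left {m ι : Type*} [Fintype m] (s : Finset ι)
    (v : ι → m → ℝ) (w : m → ℝ) :
    (∑ i ∈ s, v i) ⬝ᵥ w = ∑ i ∈ s, v i ⬝ᵥ w := by
  simp [dotProduct, Finset.sum_mul, Finset.sum_apply]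
  exact Finset.sum_comm

private lemma mulVec_dp {m : Type*} [Fintype m] (A : Matrix m m ℝ) (x y : m → ℝ) :
    (A.mulVec x) ⬝ᵥ y = x ⬝ᵥ (Aᵀ.mulVec y) := by
  rw [Matrix.dotProduct_mulVec, Matrix.vecMul_transpose]

private lemma sum_mulVec' {m ι : Type*} [Fintype m] (s : Finset ι)
    (A : ι → Matrix m m ℝ) (x : m → ℝ) :
    (∑ i ∈ s, A i).mulVec x = ∑ i ∈ s, (A i).mulVec x := by
  classical
  induction s using Finset.induction with
  | empty => simp [Matrix.mulVec]
  | insert _ _ h ih => simp [Finset.sum_insert h, Matrix.add_mulVec, ih]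

private lemma bd_sum {mm oo ι : Type*} [DecidableEq oo] (s : Finset ι)
    (g : ι → Matrix mm mm ℝ) :
    Matrix.blockDiagonal (fun _ : oo => ∑ i ∈ s, g i)
      = ∑ i ∈ s, Matrix.blockDiagonal (fun _ : oo => g i) := by
  classical
  induction s using Finset.induction with
  | empty =>
      rw [Finset.sum_empty, Finset.sum_empty,
        show (fun _ : oo => (0 : Matrix mm mm ℝ)) = 0 from rfl, Matrix.blockDiagonal_zero]
  | @insert a s h ih =>
      rw [Finset.sum_insert h, Finset.sum_insert h,
        show (fun _ : oo => g a + ∑ i ∈ s, g i)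
          = (fun _ : oo => g a) + (fun _ : oo => ∑ i ∈ s, g i) from rfl,
        Matrix.blockDiagonal_add, ih]

/-- Let `N = dn`, `n > 1`, and let `A₁, …, A_{d-1}` encode an orthonormal system of linear
tangent vector fields on `S^{d-1}` (skew-symmetric, `AᵢᵀAᵢ = I`, `AᵢᵀAⱼ + AⱼᵀAᵢ = 0`).
If `f` on `S^{N-1}` is invariant under all block-diagonal matrices `𝒢_λ` with `n` equal
blocks `Σ λᵢ Aᵢ`, `λ ∈ S^{d-1}`, then `f` is constant on
`S^{N-1} ∩ span {θ, 𝒜₁θ, …, 𝒜_{d-1}θ}` for every `θ ∈ S^{N-1}`. -/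
theorem invariant_function_constant_on_orbit_span (d n : ℕ) (hn : 1 < n)
    (B : Fin (d - 1) → Matrix (Fin d) (Fin d) ℝ)
    (hskew : ∀ i, (B i)ᵀ = -B i)
    (horth : ∀ i, (B i)ᵀ * B i = 1)
    (hanti : ∀ i j, i ≠ j → (B i)ᵀ * B j + (B j)ᵀ * B i = 0)
    (f : (Fin d × Fin n → ℝ) → ℝ)
    (hf : ∀ (lam₀ : ℝ) (lam : Fin (d - 1) → ℝ), lam₀ ^ 2 + ∑ i, lam i ^ 2 = 1 →
      ∀ θ : Fin d × Fin n → ℝ, θ ⬝ᵥ θ = 1 →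
        f ((Matrix.blockDiagonal fun _ : Fin n =>
          lam₀ • (1 : Matrix (Fin d) (Fin d) ℝ) + ∑ i, lam i • B i).mulVec θ) = f θ)
    (θ : Fin d × Fin n → ℝ) (hθ : θ ⬝ᵥ θ = 1)
    (η : Fin d × Fin n → ℝ) (hη : η ⬝ᵥ η = 1)
    (hmem : η ∈ Submodule.span ℝ (insert θ (Set.range fun i : Fin (d - 1) =>
      (Matrix.blockDiagonal fun _ : Fin n => B i).mulVec θ))) :
    f η = f θ := by
  classical
  set M : Fin (d - 1) → Matrix (Fin d × Fin n) (Fin d × Fin n) ℝ :=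
    fun i => Matrix.blockDiagonal fun _ : Fin n => B i with hM
  set u : Fin (d - 1) → (Fin d × Fin n → ℝ) := fun i => (M i).mulVec θ with hu
  have hMskew : ∀ i, (M i)ᵀ = -(M i) := by
    intro i
    show (Matrix.blockDiagonal fun _ : Fin n => B i)ᵀ
      = -(Matrix.blockDiagonal fun _ : Fin n => B i)
    rw [Matrix.blockDiagonal_transpose,
      show (fun k : Fin n => (B i)ᵀ) = -(fun _ : Fin n => B i) from by
        funext k; simp [hskew],
      Matrix.blockDiagonal_neg]
  have hMorth : ∀ i, (M i)ᵀ * M i = 1 := by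
    intro i
    show (Matrix.blockDiagonal fun _ : Fin n => B i)ᵀ
      * (Matrix.blockDiagonal fun _ : Fin n => B i) = 1
    rw [Matrix.blockDiagonal_transpose, ← Matrix.blockDiagonal_mul]
    simp only [horth]
    exact Matrix.blockDiagonal_one
  have hManti : ∀ i j, i ≠ j → (M i)ᵀ * M j + (M j)ᵀ * M i = 0 := by
    intro i j hij
    show (Matrix.blockDiagonal fun _ : Fin n => B i)ᵀ
        * (Matrix.blockDiagonal fun _ : Fin n => B j)
      + (Matrix.blockDiagonal fun _ : Fin n => B j)ᵀ
        * (Matrix.blockDiagonal fun _ : Fin n => B i) = 0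
    rw [Matrix.blockDiagonal_transpose, Matrix.blockDiagonal_transpose,
      ← Matrix.blockDiagonal_mul, ← Matrix.blockDiagonal_mul, ← Matrix.blockDiagonal_add]
    have hz : ((fun _ : Fin n => (B i)ᵀ * B j) + fun _ : Fin n => (B j)ᵀ * B i)
        = (0 : Fin n → Matrix (Fin d) (Fin d) ℝ) := funext fun _ => hanti i j hij
    rw [hz, Matrix.blockDiagonal_zero]
  -- orthonormality of θ, u i
  have hθu : ∀ i, θ ⬝ᵥ u i = 0 := by
    intro i
    have h1 : u i ⬝ᵥ θ = θ ⬝ᵥ ((M i)ᵀ.mulVec θ) := mulVec_dp _ _ _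
    rw [hMskew i, Matrix.neg_mulVec] at h1
    have h2 : u i ⬝ᵥ θ = θ ⬝ᵥ u i := dotProduct_comm _ _
    have h3 : θ ⬝ᵥ (-(M i).mulVec θ) = -(θ ⬝ᵥ u i) := by
      rw [show (M i).mulVec θ = u i from rfl, dotProduct_neg]
    have := h2.symm.trans (h1.trans h3)
    linarith
  have huθ : ∀ i, u i ⬝ᵥ θ = 0 := fun i => (dotProduct_comm _ _).trans (hθu i)
  have huu : ∀ i j, u i ⬝ᵥ u j = if i = j then 1 else 0 := by
    intro i j
    have key : u i ⬝ᵥ u j = θ ⬝ᵥ (((M i)ᵀ * M j).mulVec θ) := by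
      rw [hu]
      rw [mulVec_dp, Matrix.mulVec_mulVec]
    by_cases hij : i = j
    · subst hij
      rw [key, hMorth i, Matrix.one_mulVec, hθ, if_pos rfl]
    · rw [if_neg hij]
      have key' : u j ⬝ᵥ u i = θ ⬝ᵥ (((M j)ᵀ * M i).mulVec θ) := by
        rw [hu, mulVec_dp, Matrix.mulVec_mulVec]
      have hcomm : u i ⬝ᵥ u j = u j ⬝ᵥ u i := dotProduct_comm _ _
      have hsum : u i ⬝ᵥ u j + u j ⬝ᵥ u i = 0 := by
        rw [key, key', ← dotProduct_add, ← Matrix.add_mulVec, hManti i j hij]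
        simp [Matrix.zero_mulVec]
      linarith [hcomm]
  -- decompose η
  rw [Submodule.mem_span_insert] at hmem
  obtain ⟨a, z, hz, hηz⟩ := hmem
  rw [Submodule.mem_span_range_iff_exists_fun] at hz
  obtain ⟨c, hc⟩ := hz
  have hdecomp : η = a • θ + ∑ i, c i • u i := by
    rw [hηz, ← hc]
  -- norm identity
  have e0 : (a • θ) ⬝ᵥ (a • θ) = a ^ 2 := by
    rw [smul_dotProduct, dotProduct_smul, hθ]
    simp [sq, smul_eq_mul]
  have e1 : (a • θ) ⬝ᵥ (∑ i, c i • u i) = 0 := by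
    rw [smul_dotProduct, dp_sum_right]
    simp [dotProduct_smul, hθu]
  have e2 : (∑ i, c i • u i) ⬝ᵥ (a • θ) = 0 := by
    rw [dotProduct_smul, dp_sum_left]
    simp [smul_dotProduct, huθ]
  have e3 : (∑ i, c i • u i) ⬝ᵥ (∑ j, c j • u j) = ∑ i, c i ^ 2 := by
    rw [dp_sum_left]
    refine Finset.sum_congr rfl fun i _ => ?_
    rw [dp_sum_right]
    have hterm : ∀ j, (c i • u i) ⬝ᵥ (c j • u j) = c i * c j * (u i ⬝ᵥ u j) := by
      intro j
      rw [smul_dotProduct, dotProduct_smul, smul_eq_mul, smul_eq_mul]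
      ring
    simp only [hterm, huu]
    rw [Finset.sum_eq_single i]
    · simp [sq]
    · intro j _ hji; simp [Ne.symm hji]
    · intro h; exact absurd (Finset.mem_univ i) h
  have hnorm : a ^ 2 + ∑ i, c i ^ 2 = 1 := by
    have hexp : η ⬝ᵥ η = a ^ 2 + ∑ i, c i ^ 2 := by
      rw [hdecomp, add_dotProduct, dotProduct_add, dotProduct_add,
        e0, e1, e2, e3]
      ring
    rw [hexp] at hη
    exact hη
  -- apply invariance
  have hη' : η = (Matrix.blockDiagonal fun _ : Fin n =>
      a • (1 : Matrix (Fin d) (Fin d) ℝ) + ∑ i, c i • B i).mulVec θ := by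
    have hbd : (Matrix.blockDiagonal fun _ : Fin n =>
        a • (1 : Matrix (Fin d) (Fin d) ℝ) + ∑ i, c i • B i)
        = a • (1 : Matrix (Fin d × Fin n) (Fin d × Fin n) ℝ) + ∑ i, c i • M i := by
      rw [show (fun _ : Fin n => a • (1 : Matrix (Fin d) (Fin d) ℝ) + ∑ i, c i • B i)
          = (fun _ : Fin n => a • (1 : Matrix (Fin d) (Fin d) ℝ))
            + (fun _ : Fin n => ∑ i, c i • B i) from rfl,
        Matrix.blockDiagonal_add]
      congr 1
      · rw [show (fun _ : Fin n => a • (1 : Matrix (Fin d) (Fin d) ℝ))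
            = a • (fun _ : Fin n => (1 : Matrix (Fin d) (Fin d) ℝ)) from rfl,
          Matrix.blockDiagonal_smul]
        congr 1
        exact Matrix.blockDiagonal_one
      · rw [bd_sum]
        refine Finset.sum_congr rfl fun i _ => ?_
        rw [show (fun _ : Fin n => c i • B i)
            = c i • (fun _ : Fin n => B i) from rfl, Matrix.blockDiagonal_smul]
    rw [hbd, Matrix.add_mulVec, sum_mulVec', Matrix.smul_mulVec, Matrix.one_mulVec]
    rw [hdecomp]
    congr 1
    refine Finset.sum_congr rfl fun i _ => ?_
    rw [Matrix.smul_mulVec, hu]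
  rw [hη']
  exact hf a c hnorm θ hθ
end

section
/- Let K and L be equilibrated convex bodies in ℍ², the left quaternionic vector space of pairs of quaternions identified with ℝ⁸. If vol₄(K ∩ y^⊥) ≤ vol₄(L ∩ y^⊥) for every y ∈ ℍ² with ‖y‖₂ = 1, where y^⊥ = {x ∈ ℍ² : x₁·conj(y₁) + x₂·conj(y₂) = 0} is the quaternionic hyperplane orthogonal to y (a real 4-dimensional subspace), then vol₈(K) ≤ vol₈(L). (The quaternionic Busemann–Petty problem has an affirmative answer for n = 2.) -/
open MeasureTheory Quaternion
open scoped ENNReal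

section AuxiliaryLemmas

open Metric Set
open scoped Pointwise

lemma aux_ball {S : Set ℍ[ℝ]} (hc : IsCompact S) (hne : S.Nonempty)
    (he : ∀ p ∈ S, ∀ q : ℍ[ℝ], ‖q‖ ≤ 1 → q * p ∈ S) :
    ∃ R : ℝ, 0 ≤ R ∧ S = Metric.closedBall 0 R := by
  obtain ⟨p₀, hp₀, hmax⟩ := hc.exists_isMaxOn hne continuous_norm.continuousOn
  refine ⟨‖p₀‖, norm_nonneg _, ?_⟩
  ext w
  simp only [Metric.mem_closedBall, dist_zero_right]
  constructor
  · intro hw; exact hmax hw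
  · intro hw
    rcases eq_or_ne p₀ 0 with h0 | h0
    · have hw0 : w = 0 := by
        have : ‖w‖ ≤ 0 := by simpa [h0] using hw
        simpa using le_antisymm this (norm_nonneg w)
      have := he p₀ hp₀ 0 (by simp)
      simpa [hw0] using this
    · have hq : ‖w * p₀⁻¹‖ ≤ 1 := by
        rw [norm_mul, norm_inv]
        have hp : 0 < ‖p₀‖ := norm_pos_iff.mpr h0
        calc ‖w‖ * ‖p₀‖⁻¹ ≤ ‖p₀‖ * ‖p₀‖⁻¹ := by gcongr
          _ = 1 := mul_inv_cancel₀ hp.ne'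
      have := he p₀ hp₀ (w * p₀⁻¹) hq
      simpa [mul_assoc, inv_mul_cancel₀ h0] using this


lemma aux_radius {F : Type*} [NormedAddCommGroup F] [NormedSpace ℝ F]
    [MeasurableSpace F] [BorelSpace F]
    (f : ℍ[ℝ] →ₗ[ℝ] F) (c : ℝ) (hc : 0 < c) (hfn : ∀ q, ‖f q‖ = c * ‖q‖)
    {R r : ℝ} (hr : 0 ≤ r)
    (h : μH[(4 : ℝ)] (f '' Metric.closedBall 0 R) ≤
      μH[(4 : ℝ)] (f '' Metric.closedBall 0 r)) :
    R ≤ r := by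
  letI : MeasurableSpace ℍ[ℝ] := borel _
  haveI : BorelSpace ℍ[ℝ] := ⟨rfl⟩
  -- the normalized map is an isometry
  set g : ℍ[ℝ] →ₗ[ℝ] F := c⁻¹ • f with hg
  have hgn : ∀ q, ‖g q‖ = ‖q‖ := by
    intro q
    simp only [hg, LinearMap.smul_apply, norm_smul, hfn, norm_inv, Real.norm_eq_abs,
      abs_of_pos hc]
    field_simp
  have hgiso : Isometry g := AddMonoidHomClass.isometry_of_norm g hgn
  -- express images under f via g and scaling
  have himg : ∀ s : Set ℍ[ℝ], μH[(4 : ℝ)] (f '' s)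
      = (‖c‖₊ : ℝ≥0∞) ^ (4 : ℝ) * μH[(4 : ℝ)] s := by
    intro s
    have h1 : f '' s = c • (g '' s) := by
      rw [← Set.image_smul, Set.image_image]
      apply Set.image_congr
      intro a _
      simp [hg, smul_smul, mul_inv_cancel₀ hc.ne']
    rw [h1, Measure.hausdorffMeasure_smul₀ (by norm_num) hc.ne' (g '' s),
      hgiso.hausdorffMeasure_image (Or.inl (by norm_num))]
    rw [ENNReal.smul_def, smul_eq_mul, ENNReal.coe_rpow_of_nonneg _ (by norm_num : (0:ℝ) ≤ 4)]
  rw [himg, himg] at h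
  have hκ0 : ((‖c‖₊ : ℝ≥0∞) ^ (4 : ℝ)) ≠ 0 := by
    simp [ENNReal.rpow_eq_zero_iff, hc.ne', hc.le]
  have hκt : ((‖c‖₊ : ℝ≥0∞) ^ (4 : ℝ)) ≠ ⊤ := by
    exact ENNReal.rpow_ne_top_of_nonneg (by norm_num) (by simp)
  replace h := (ENNReal.mul_le_mul_iff_right hκ0 hκt).mp h
  -- the Hausdorff measure μH[4] on ℍ is a Haar measure
  haveI hhaar : (μH[(4 : ℝ)] : Measure ℍ[ℝ]).IsAddHaarMeasure := by
    have h4 : (4 : ℝ) = ((Module.finrank ℝ ℍ[ℝ] : ℕ) : ℝ) := by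
      rw [Quaternion.finrank_eq_four]; norm_num
    rw [h4]; infer_instance
  by_contra hlt
  push_neg at hlt
  set p : ℍ[ℝ] := ((r + R) / 2) • (1 : ℍ[ℝ]) with hp
  set ε : ℝ := (R - r) / 4 with hε
  have hε0 : 0 < ε := by simp only [hε]; linarith
  have hnp : ‖p‖ = (r + R) / 2 := by
    rw [hp, norm_smul, norm_one, mul_one, Real.norm_eq_abs, abs_of_nonneg (by linarith)]
  have hsub : Metric.closedBall p ε ⊆ Metric.closedBall 0 R := by
    intro w hw
    simp only [Metric.mem_closedBall, dist_zero_right] at hw ⊢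
    calc ‖w‖ ≤ ‖w - p‖ + ‖p‖ := by
          simpa using norm_add_le (w - p) p
      _ ≤ ε + (r + R) / 2 := by
          rw [← dist_eq_norm]
          exact add_le_add hw hnp.le
      _ ≤ R := by rw [hε]; linarith
  have hdisj : Disjoint (Metric.closedBall p ε) (Metric.closedBall (0 : ℍ[ℝ]) r) := by
    rw [Set.disjoint_left]
    intro w hw hw'
    simp only [Metric.mem_closedBall, dist_zero_right] at hw'
    have : ‖p‖ ≤ ‖p - w‖ + ‖w‖ := by simpa using norm_add_le (p - w) w
    rw [hnp, ← dist_eq_norm, dist_comm] at this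
    have := le_trans this (add_le_add hw hw')
    simp only [hε] at this
    linarith
  have hmeas : MeasurableSet (Metric.closedBall (0 : ℍ[ℝ]) r) :=
    measurableSet_closedBall
  have hun : μH[(4 : ℝ)] (Metric.closedBall p ε) + μH[(4 : ℝ)] (Metric.closedBall (0:ℍ[ℝ]) r)
      ≤ μH[(4 : ℝ)] (Metric.closedBall (0:ℍ[ℝ]) r) := by
    calc μH[(4 : ℝ)] (Metric.closedBall p ε) + μH[(4 : ℝ)] (Metric.closedBall (0:ℍ[ℝ]) r)
        = μH[(4 : ℝ)] (Metric.closedBall p ε ∪ Metric.closedBall (0:ℍ[ℝ]) r) :=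
          (measure_union hdisj hmeas).symm
      _ ≤ μH[(4 : ℝ)] (Metric.closedBall (0:ℍ[ℝ]) R) :=
          measure_mono (Set.union_subset hsub
            (Metric.closedBall_subset_closedBall (by linarith)))
      _ ≤ μH[(4 : ℝ)] (Metric.closedBall (0:ℍ[ℝ]) r) := h
  have hfin : μH[(4 : ℝ)] (Metric.closedBall (0:ℍ[ℝ]) r) ≠ ⊤ :=
    (isCompact_closedBall _ _).measure_lt_top.ne
  have hzero : μH[(4 : ℝ)] (Metric.closedBall p ε) = 0 := by
    have h0' : μH[(4 : ℝ)] (Metric.closedBall p ε) + μH[(4 : ℝ)] (Metric.closedBall (0:ℍ[ℝ]) r)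
        ≤ 0 + μH[(4 : ℝ)] (Metric.closedBall (0:ℍ[ℝ]) r) := by simpa using hun
    simpa using (ENNReal.add_le_add_iff_right hfin).mp h0'
  exact absurd hzero (Metric.measure_closedBall_pos _ p hε0).ne'


lemma aux_core
    [MeasurableSpace (PiLp 2 (fun _ : Fin 2 => ℍ[ℝ]))]
    [BorelSpace (PiLp 2 (fun _ : Fin 2 => ℍ[ℝ]))]
    (K L : Set (PiLp 2 (fun _ : Fin 2 => ℍ[ℝ])))
    (hKcomp : IsCompact K)
    (hKequi : ∀ x ∈ K, ∀ q : ℍ[ℝ], ‖q‖ ≤ 1 →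
      (WithLp.toLp 2 (fun j => q * x j) : PiLp 2 (fun _ : Fin 2 => ℍ[ℝ])) ∈ K)
    (hLcomp : IsCompact L)
    (hLequi : ∀ x ∈ L, ∀ q : ℍ[ℝ], ‖q‖ ≤ 1 →
      (WithLp.toLp 2 (fun j => q * x j) : PiLp 2 (fun _ : Fin 2 => ℍ[ℝ])) ∈ L)
    (h0L : (0 : PiLp 2 (fun _ : Fin 2 => ℍ[ℝ])) ∈ L)
    (x : PiLp 2 (fun _ : Fin 2 => ℍ[ℝ])) (hxK : x ∈ K) (hx : x ≠ 0)
    (y : PiLp 2 (fun _ : Fin 2 => ℍ[ℝ]))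
    (hrange : {z : PiLp 2 (fun _ : Fin 2 => ℍ[ℝ]) |
        z 0 * star (y 0) + z 1 * star (y 1) = 0}
      = Set.range (fun q : ℍ[ℝ] =>
          (WithLp.toLp 2 (fun j => q * x j) : PiLp 2 (fun _ : Fin 2 => ℍ[ℝ]))))
    (hsec1 : μH[(4 : ℝ)]
          (K ∩ {z : PiLp 2 (fun _ : Fin 2 => ℍ[ℝ]) |
            z 0 * star (y 0) + z 1 * star (y 1) = 0}) ≤
        μH[(4 : ℝ)]
          (L ∩ {z : PiLp 2 (fun _ : Fin 2 => ℍ[ℝ]) |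
            z 0 * star (y 0) + z 1 * star (y 1) = 0})) :
    x ∈ L := by
  have hnx : 0 < ‖x‖ := norm_pos_iff.mpr hx
  -- the linear embedding of ℍ onto the quaternionic line through x
  set f : ℍ[ℝ] →ₗ[ℝ] PiLp 2 (fun _ : Fin 2 => ℍ[ℝ]) :=
    { toFun := fun q => (WithLp.toLp 2 (fun j => q * x j) : PiLp 2 (fun _ : Fin 2 => ℍ[ℝ]))
      map_add' := by intro a b; ext1 j; exact add_mul a b (x j)
      map_smul' := by intro r a; ext1 j; exact smul_mul_assoc r a (x j) } with hf
  have hfap : ∀ q : ℍ[ℝ], ∀ j, f q j = q * x j := fun q j => rfl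
  have hx2 : ‖x‖ ^ 2 = ‖x 0‖ ^ 2 + ‖x 1‖ ^ 2 := by
    rw [PiLp.norm_sq_eq_of_L2 (fun _ : Fin 2 => ℍ[ℝ]) x, Fin.sum_univ_two]
  have hno : ∀ q : ℍ[ℝ], ‖f q‖ = ‖x‖ * ‖q‖ := by
    intro q
    have h1 : ‖f q‖ ^ 2 = (‖x‖ * ‖q‖) ^ 2 := by
      rw [PiLp.norm_sq_eq_of_L2 (fun _ : Fin 2 => ℍ[ℝ]) (f q), Fin.sum_univ_two]
      simp only [hfap, norm_mul]
      rw [mul_pow ‖x‖ ‖q‖, hx2]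
      ring
    exact (pow_left_inj₀ (norm_nonneg _) (by positivity) two_ne_zero).mp h1
  have hfc : Continuous f := f.continuous_of_finiteDimensional
  have hrange' : Set.range (fun q : ℍ[ℝ] => (WithLp.toLp 2 (fun j => q * x j) : PiLp 2 (fun _ : Fin 2 => ℍ[ℝ]))) = Set.range f := rfl
  -- preimages of K and L are closed balls
  have hball : ∀ S : Set (PiLp 2 (fun _ : Fin 2 => ℍ[ℝ])), IsCompact S →
      (∀ w ∈ S, ∀ q : ℍ[ℝ], ‖q‖ ≤ 1 → (WithLp.toLp 2 (fun j => q * w j) : PiLp 2 (fun _ : Fin 2 => ℍ[ℝ])) ∈ S) →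
      (f ⁻¹' S).Nonempty →
      ∃ R : ℝ, 0 ≤ R ∧ f ⁻¹' S = Metric.closedBall 0 R := by
    intro S hScomp hSequi hSne
    apply aux_ball _ hSne
    · intro p hp q hq
      have h1 := hSequi (f p) hp q hq
      have h2 : (WithLp.toLp 2 (fun j => q * f p j) : PiLp 2 (fun _ : Fin 2 => ℍ[ℝ])) = f (q * p) := by
        ext1 j; show q * f p j = f (q * p) j; rw [hfap, hfap, mul_assoc]
      rw [h2] at h1
      exact h1
    · obtain ⟨M, hM⟩ := isBounded_iff_forall_norm_le.mp hScomp.isBounded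
      apply Metric.isCompact_of_isClosed_isBounded (hScomp.isClosed.preimage hfc)
      have hsub : f ⁻¹' S ⊆ Metric.closedBall 0 (M / ‖x‖) := by
        intro q hq
        simp only [Metric.mem_closedBall, dist_zero_right]
        rw [le_div_iff₀ hnx, mul_comm, ← hno]
        exact hM _ hq
      exact (Metric.isBounded_closedBall).subset hsub
  obtain ⟨RK, hRK0, hSK⟩ := hball K hKcomp hKequi ⟨1, by
    show f 1 ∈ K
    have : f 1 = x := by ext1 j; rw [hfap, one_mul]
    rwa [this]⟩
  obtain ⟨RL, hRL0, hSL⟩ := hball L hLcomp hLequi ⟨0, by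
    show f 0 ∈ L
    rw [map_zero]; exact h0L⟩
  -- the sections are images of the balls
  have himgK : f '' (Metric.closedBall 0 RK) =
      K ∩ {z : PiLp 2 (fun _ : Fin 2 => ℍ[ℝ]) | z 0 * star (y 0) + z 1 * star (y 1) = 0} := by
    rw [← hSK, Set.image_preimage_eq_inter_range, hrange, hrange']
  have himgL : f '' (Metric.closedBall 0 RL) =
      L ∩ {z : PiLp 2 (fun _ : Fin 2 => ℍ[ℝ]) | z 0 * star (y 0) + z 1 * star (y 1) = 0} := by
    rw [← hSL, Set.image_preimage_eq_inter_range, hrange, hrange']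
  have hRKL : RK ≤ RL := by
    apply aux_radius f ‖x‖ hnx hno hRL0
    rw [himgK, himgL]
    exact hsec1
  -- conclude
  have h1K : (1 : ℍ[ℝ]) ∈ Metric.closedBall (0 : ℍ[ℝ]) RK := by
    rw [← hSK]
    show f 1 ∈ K
    have : f 1 = x := by ext1 j; rw [hfap, one_mul]
    rwa [this]
  have h1L : (1 : ℍ[ℝ]) ∈ f ⁻¹' L := by
    rw [hSL]
    simp only [Metric.mem_closedBall, dist_zero_right, norm_one] at h1K ⊢
    linarith
  have hmem : f 1 ∈ L := Set.mem_preimage.mp h1L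
  have hfx : f 1 = x := by ext1 j; rw [hfap, one_mul]
  rwa [hfx] at hmem

end AuxiliaryLemmas

set_option maxHeartbeats 1000000 in
/-- The quaternionic Busemann–Petty problem has an affirmative answer for `n = 2`:
equilibrated convex bodies in `ℍ² ≅ ℝ⁸` with smaller quaternionic hyperplane sections
have smaller volume. -/
theorem busemann_petty_quaternionic_affirmative
    [MeasurableSpace (PiLp 2 (fun _ : Fin 2 => ℍ[ℝ]))]
    [BorelSpace (PiLp 2 (fun _ : Fin 2 => ℍ[ℝ]))]
    (K L : Set (PiLp 2 (fun _ : Fin 2 => ℍ[ℝ])))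
    (hKcomp : IsCompact K) (hKconv : Convex ℝ K) (hKint : (interior K).Nonempty)
    (hKequi : ∀ x ∈ K, ∀ q : ℍ[ℝ], ‖q‖ ≤ 1 →
      (WithLp.toLp 2 (fun j => q * x j) : PiLp 2 (fun _ : Fin 2 => ℍ[ℝ])) ∈ K)
    (hLcomp : IsCompact L) (hLconv : Convex ℝ L) (hLint : (interior L).Nonempty)
    (hLequi : ∀ x ∈ L, ∀ q : ℍ[ℝ], ‖q‖ ≤ 1 →
      (WithLp.toLp 2 (fun j => q * x j) : PiLp 2 (fun _ : Fin 2 => ℍ[ℝ])) ∈ L)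
    (hsec : ∀ y : PiLp 2 (fun _ : Fin 2 => ℍ[ℝ]), ‖y‖ = 1 →
      μH[(4 : ℝ)]
          (K ∩ {x : PiLp 2 (fun _ : Fin 2 => ℍ[ℝ]) |
            x 0 * star (y 0) + x 1 * star (y 1) = 0}) ≤
        μH[(4 : ℝ)]
          (L ∩ {x : PiLp 2 (fun _ : Fin 2 => ℍ[ℝ]) |
            x 0 * star (y 0) + x 1 * star (y 1) = 0})) :
    μH[(8 : ℝ)] K ≤ μH[(8 : ℝ)] L := by
  classical
  have h0L : (0 : PiLp 2 (fun _ : Fin 2 => ℍ[ℝ])) ∈ L := by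
    obtain ⟨z, hz⟩ := hLint
    have hzL : z ∈ L := interior_subset hz
    have h1 := hLequi z hzL 0 (by simp)
    have h2 : (WithLp.toLp 2 (fun j => (0 : ℍ[ℝ]) * z j) : PiLp 2 (fun _ : Fin 2 => ℍ[ℝ]))
        = (0 : PiLp 2 (fun _ : Fin 2 => ℍ[ℝ])) := by
      ext1 j; simp
    rwa [h2] at h1
  suffices hKL : K ⊆ L from measure_mono hKL
  intro x hxK
  by_cases hx : x = 0
  · rwa [hx]
  by_cases hx0 : x 0 = 0
  -- Case 1 : x 0 = 0, take y = (1, 0)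
  · have hx1 : x 1 ≠ 0 := by
      intro h1
      apply hx
      ext1 j
      fin_cases j
      · exact hx0
      · exact h1
    set y : PiLp 2 (fun _ : Fin 2 => ℍ[ℝ]) :=
      WithLp.toLp 2 (fun j : Fin 2 => if j = 0 then (1 : ℍ[ℝ]) else 0) with hy
    have hy0 : y 0 = 1 := by simp [hy]
    have hy1 : y 1 = 0 := by simp [hy]
    have hyn : ‖y‖ = 1 := by
      have h2 : ‖y‖ ^ 2 = ‖y 0‖ ^ 2 + ‖y 1‖ ^ 2 := by
        rw [PiLp.norm_sq_eq_of_L2 (fun _ : Fin 2 => ℍ[ℝ]) y, Fin.sum_univ_two]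
      rw [hy0, hy1] at h2
      simp only [norm_one, norm_zero, one_pow] at h2
      have : ‖y‖ ^ 2 = 1 ^ 2 := by rw [h2]; norm_num
      exact (pow_left_inj₀ (norm_nonneg _) one_pos.le two_ne_zero).mp this
    refine aux_core K L hKcomp hKequi hLcomp hLequi h0L x hxK hx y ?_ (hsec y hyn)
    ext z
    simp only [Set.mem_setOf_eq, hy0, hy1, star_one, mul_one, star_zero, mul_zero,
      add_zero, Set.mem_range]
    constructor
    · intro hz
      refine ⟨z 1 * (x 1)⁻¹, ?_⟩
      ext1 j
      fin_cases j
      · show z 1 * (x 1)⁻¹ * x 0 = z 0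
        rw [hx0, mul_zero, hz]
      · show z 1 * (x 1)⁻¹ * x 1 = z 1
        rw [mul_assoc, inv_mul_cancel₀ hx1, mul_one]
    · rintro ⟨q, rfl⟩
      show q * x 0 = 0
      rw [hx0, mul_zero]
  -- Case 2 : x 0 ≠ 0
  · have hc0 : (0:ℝ) < ‖x 0‖ := norm_pos_iff.mpr hx0
    have hnx : (0:ℝ) < ‖x‖ := norm_pos_iff.mpr hx
    set b : ℝ := ‖x 0‖ ^ 2 with hb
    have hb0 : (0:ℝ) < b := by positivity
    set t : ℝ := (‖x 0‖ * ‖x‖)⁻¹ with ht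
    have ht0 : (0:ℝ) < t := by positivity
    set y : PiLp 2 (fun _ : Fin 2 => ℍ[ℝ]) :=
      WithLp.toLp 2 (fun j : Fin 2 => if j = 0 then t • (-(star (x 1) * x 0)) else t • ((b : ℝ) • (1 : ℍ[ℝ]))) with hy
    have hy0 : y 0 = t • (-(star (x 1) * x 0)) := by simp [hy]
    have hy1 : y 1 = t • ((b : ℝ) • (1 : ℍ[ℝ])) := by simp [hy]
    have hx2 : ‖x‖ ^ 2 = ‖x 0‖ ^ 2 + ‖x 1‖ ^ 2 := by
      rw [PiLp.norm_sq_eq_of_L2 (fun _ : Fin 2 => ℍ[ℝ]) x, Fin.sum_univ_two]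
    -- the norm of y is 1
    have hyn : ‖y‖ = 1 := by
      have h2 : ‖y‖ ^ 2 = ‖y 0‖ ^ 2 + ‖y 1‖ ^ 2 := by
        rw [PiLp.norm_sq_eq_of_L2 (fun _ : Fin 2 => ℍ[ℝ]) y, Fin.sum_univ_two]
      rw [hy0, hy1] at h2
      have hn0 : ‖t • (-(star (x 1) * x 0))‖ = t * (‖x 1‖ * ‖x 0‖) := by
        rw [norm_smul, norm_neg, norm_mul, Quaternion.norm_star, Real.norm_eq_abs, abs_of_pos ht0]
      have hn1 : ‖t • ((b : ℝ) • (1 : ℍ[ℝ]))‖ = t * b := by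
        rw [norm_smul, norm_smul, norm_one, mul_one, Real.norm_eq_abs, Real.norm_eq_abs,
          abs_of_pos ht0, abs_of_pos hb0]
      rw [hn0, hn1] at h2
      have hsq : ‖y‖ ^ 2 = 1 ^ 2 := by
        rw [h2, ht, hb]
        have h3 : ‖x‖ ^ 2 = ‖x 0‖ ^ 2 + ‖x 1‖ ^ 2 := hx2
        field_simp
        nlinarith [hc0, hnx]
      exact (pow_left_inj₀ (norm_nonneg _) one_pos.le two_ne_zero).mp hsq
    -- star computations
    have hsy0 : star (y 0) = t • (-(star (x 0) * x 1)) := by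
      rw [hy0, Quaternion.star_smul, star_neg, star_mul, star_star]
    have hsy1 : star (y 1) = t • ((b : ℝ) • (1 : ℍ[ℝ])) := by
      rw [hy1, Quaternion.star_smul, Quaternion.star_smul, star_one]
    have hcoe : ∀ w : ℍ[ℝ], w * ((b:ℝ) • (1:ℍ[ℝ])) = b • w := by
      intro w; rw [mul_smul_comm, mul_one]
    have hxsx : x 0 * star (x 0) = (b : ℝ) • (1 : ℍ[ℝ]) := by
      rw [Quaternion.self_mul_star, hb]
      rw [Quaternion.normSq_eq_norm_mul_self]
      rw [← Quaternion.coe_mul_eq_smul, mul_one]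
      norm_cast
      rw [pow_two]
    have hsxx : star (x 0) * x 0 = (b : ℝ) • (1 : ℍ[ℝ]) := by
      rw [Quaternion.star_mul_self, hb]
      rw [Quaternion.normSq_eq_norm_mul_self]
      rw [← Quaternion.coe_mul_eq_smul, mul_one]
      norm_cast
      rw [pow_two]
    refine aux_core K L hKcomp hKequi hLcomp hLequi h0L x hxK hx y ?_ (hsec y hyn)
    ext z
    simp only [Set.mem_setOf_eq, Set.mem_range]
    rw [hsy0, hsy1]
    constructor
    · intro hz
      have hz' : z 0 * (-(star (x 0) * x 1)) + b • z 1 = 0 := by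
        rw [mul_smul_comm, mul_smul_comm, hcoe, ← smul_add] at hz
        rcases smul_eq_zero.mp hz with h | h
        · exact absurd h ht0.ne'
        · exact h
      have hz1 : b • z 1 = z 0 * (star (x 0) * x 1) := by
        have h5 := eq_neg_of_add_eq_zero_right hz'
        rw [mul_neg, neg_neg] at h5
        exact h5
      refine ⟨b⁻¹ • (z 0 * star (x 0)), ?_⟩
      ext1 j
      fin_cases j
      · show (b⁻¹ • (z 0 * star (x 0))) * x 0 = z 0
        rw [smul_mul_assoc, mul_assoc, hsxx, hcoe, smul_smul, inv_mul_cancel₀ hb0.ne',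
          one_smul]
      · show (b⁻¹ • (z 0 * star (x 0))) * x 1 = z 1
        rw [smul_mul_assoc, mul_assoc, ← hz1, smul_smul, inv_mul_cancel₀ hb0.ne', one_smul]
    · rintro ⟨q, rfl⟩
      show q * x 0 * (t • (-(star (x 0) * x 1))) + q * x 1 * (t • ((b:ℝ) • (1:ℍ[ℝ]))) = 0
      have hkey : q * x 0 * (star (x 0) * x 1) = b • (q * x 1) := by
        rw [mul_assoc q (x 0), ← mul_assoc (x 0), hxsx, smul_mul_assoc, one_mul,
          mul_smul_comm]
      rw [mul_smul_comm, mul_smul_comm, hcoe, ← smul_add, mul_neg, hkey,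
        neg_add_cancel, smul_zero]
end
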